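/- Let 𝒜 be a function clone and let B be a relational structure with polymorphism clone ℬ. Then: (i) 𝒜 is B-colorable if and only if there exists an h1 clone homomorphism from 𝒜 to ℬ; (ii) 𝒜 is strongly B-colorable if and only if there exists a strong h1 clone homomorphism from 𝒜 to ℬ. -/

import Mathlib

/-! ### Relational structures, pp-formulas, pp-powers -/

/-- A relational structure with signature `σ` (arities given by `ar`) on domain `D`. -/
structure RelStruct (σ : Type) (ar : σ → ℕ) (D : Type) where
  rel : ∀ s : σ, (Fin (ar s) → D) → Prop

section Rel

variable {σ : Type} {ar : σ → ℕ} {τ : Type} {br : τ → ℕ} {D E : Type}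

/-- `h` is a homomorphism between two relational structures in the same signature. -/
def IsHomOf (SA : RelStruct σ ar D) (SB : RelStruct σ ar E) (h : D → E) : Prop :=
  ∀ s t, SA.rel s t → SB.rel s (fun i => h (t i))

/-- Homomorphic equivalence of relational structures in the same signature. -/
def HomEquiv (SA : RelStruct σ ar D) (SB : RelStruct σ ar E) : Prop :=
  (∃ h, IsHomOf SA SB h) ∧ (∃ h, IsHomOf SB SA h)

/-- An automorphism of a relational structure. -/
def IsAutomorphism (S : RelStruct σ ar D) (g : D ≃ D) : Prop :=
  IsHomOf S S g ∧ IsHomOf S S g.symm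

/-- ω-categoricity (for at most countable structures): for every `n` the componentwise
action of the automorphism group on `n`-tuples has finitely many orbits. -/
def OmegaCategorical (S : RelStruct σ ar D) : Prop :=
  ∀ n : ℕ, Set.Finite { O : Set (Fin n → D) | ∃ t : Fin n → D,
    O = { u | ∃ g : D ≃ D, IsAutomorphism S g ∧ (fun i => g (t i)) = u } }

/-- A model-complete core: automorphisms are dense in endomorphisms. -/
def ModelCompleteCore (S : RelStruct σ ar D) : Prop :=
  ∀ e : D → D, IsHomOf S S e → ∀ F : Set D, F.Finite →
    ∃ g : D ≃ D, IsAutomorphism S g ∧ ∀ x ∈ F, g x = e x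

/-- Primitive positive formulas over signature `(σ, ar)` with free variables of type `V`. -/
inductive PPFormula (σ : Type) (ar : σ → ℕ) : Type → Type 1 where
  | rel {V : Type} (s : σ) (t : Fin (ar s) → V) : PPFormula σ ar V
  | eq {V : Type} (x y : V) : PPFormula σ ar V
  | and {V : Type} (φ ψ : PPFormula σ ar V) : PPFormula σ ar V
  | ex {V : Type} (φ : PPFormula σ ar (Option V)) : PPFormula σ ar V

/-- Satisfaction of a pp-formula under an assignment of the free variables. -/
def PPFormula.Sat (S : RelStruct σ ar D) : {V : Type} → PPFormula σ ar V → (V → D) → Prop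
  | _, .rel s t, v => S.rel s (fun i => v (t i))
  | _, .eq x y, v => v x = v y
  | _, .and φ ψ, v => PPFormula.Sat S φ v ∧ PPFormula.Sat S ψ v
  | _, .ex φ, v => ∃ d : D, PPFormula.Sat S φ (fun o => Option.elim o d v)

/-- A relation (with coordinates indexed by `V`) is pp-definable in `S`. -/
def PpDefinable (S : RelStruct σ ar D) {V : Type} (R : (V → D) → Prop) : Prop :=
  ∃ φ : PPFormula σ ar V, ∀ v, R v ↔ PPFormula.Sat S φ v

/-- `SB` is a pp-power of `SA`: `SB` is isomorphic to a structure with domain `D^n`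
(`n ≥ 1`) whose relations, regarded as relations on `D` of `n`-fold arity,
are pp-definable in `SA`. -/
def IsPpPower (SA : RelStruct σ ar D) (SB : RelStruct τ br E) : Prop :=
  ∃ n : ℕ, 0 < n ∧ ∃ e : E ≃ (Fin n → D),
    ∀ s : τ, PpDefinable SA (fun v : Fin (br s) × Fin n → D =>
      SB.rel s (fun j => e.symm (fun i => v (j, i))))

/-- `SB` is homomorphically equivalent to a pp-power of `SA`. -/
def HomEqPpPower (SA : RelStruct σ ar D) (SB : RelStruct τ br E) : Prop :=
  ∃ (C : Type) (SC : RelStruct τ br C), IsPpPower SA SC ∧ HomEquiv SB SC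

end Rel

/-! ### Function clones (all operations have arity ≥ 1; arity index `n` means arity `n+1`) -/

/-- A set of finitary operations on `A`, where `C n` collects the `(n+1)`-ary members. -/
def OpSet (A : Type) := ∀ n : ℕ, Set ((Fin (n+1) → A) → A)

section Clone

variable {A B : Type}

/-- A function clone: contains all projections and is closed under composition. -/
structure IsClone (C : OpSet A) : Prop where
  proj : ∀ (n : ℕ) (i : Fin (n+1)), (fun t => t i) ∈ C n
  comp : ∀ (n m : ℕ) (f : (Fin (n+1) → A) → A) (g : Fin (n+1) → ((Fin (m+1) → A) → A)),
    f ∈ C n → (∀ i, g i ∈ C m) → (fun t => f (fun i => g i t)) ∈ C m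

/-- An arity-preserving assignment of operations on `B` to operations on `A`. -/
def CloneMap (A B : Type) := ∀ n : ℕ, ((Fin (n+1) → A) → A) → ((Fin (n+1) → B) → B)

/-- `ξ` maps the members of `CA` to members of `CB`. -/
def MapsCloneInto (CA : OpSet A) (CB : OpSet B) (ξ : CloneMap A B) : Prop :=
  ∀ n f, f ∈ CA n → ξ n f ∈ CB n

/-- `ξ` preserves identities of height 1: it preserves taking minors (compositions
with projections). -/
def PreservesH1 (CA : OpSet A) (ξ : CloneMap A B) : Prop :=
  ∀ (n m : ℕ) (f : (Fin (n+1) → A) → A), f ∈ CA n → ∀ p : Fin (n+1) → Fin (m+1),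
    ξ m (fun t => f (fun i => t (p i))) = fun t => ξ n f (fun i => t (p i))

/-- An h1 clone homomorphism from `CA` to `CB`. -/
def IsH1Hom (CA : OpSet A) (CB : OpSet B) (ξ : CloneMap A B) : Prop :=
  MapsCloneInto CA CB ξ ∧ PreservesH1 CA ξ

/-- `ξ` sends every projection to the same projection. -/
def PreservesProj (ξ : CloneMap A B) : Prop :=
  ∀ (n : ℕ) (i : Fin (n+1)), ξ n (fun t => t i) = fun t => t i

/-- A strong h1 clone homomorphism: an h1 clone homomorphism preserving projections. -/
def IsStrongH1Hom (CA : OpSet A) (CB : OpSet B) (ξ : CloneMap A B) : Prop :=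
  IsH1Hom CA CB ξ ∧ PreservesProj ξ

/-- A clone homomorphism: preserves projections and composition. -/
def IsCloneHom (CA : OpSet A) (CB : OpSet B) (ξ : CloneMap A B) : Prop :=
  MapsCloneInto CA CB ξ ∧ PreservesProj ξ ∧
    ∀ (n m : ℕ) (f : (Fin (n+1) → A) → A) (g : Fin (n+1) → ((Fin (m+1) → A) → A)),
      f ∈ CA n → (∀ i, g i ∈ CA m) →
      ξ m (fun t => f (fun i => g i t)) = fun t => ξ n f (fun i => ξ m (g i) t)

/-- Uniform continuity of a map between function clones. -/
def UniformlyCont (CA : OpSet A) (ξ : CloneMap A B) : Prop :=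
  ∀ Bf : Set B, Bf.Finite → ∃ Af : Set A, Af.Finite ∧
    ∀ (n : ℕ) (f g : (Fin (n+1) → A) → A), f ∈ CA n → g ∈ CA n →
      (∀ t : Fin (n+1) → A, (∀ i, t i ∈ Af) → f t = g t) →
      ∀ u : Fin (n+1) → B, (∀ i, u i ∈ Bf) → ξ n f u = ξ n g u

/-- Continuity of a map between function clones (pointwise convergence topology). -/
def ContinuousCloneMap (CA : OpSet A) (ξ : CloneMap A B) : Prop :=
  ∀ (n : ℕ) (f : (Fin (n+1) → A) → A), f ∈ CA n → ∀ Bf : Set B, Bf.Finite →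
    ∃ Af : Set A, Af.Finite ∧
      ∀ g, g ∈ CA n → (∀ t : Fin (n+1) → A, (∀ i, t i ∈ Af) → f t = g t) →
        ∀ u : Fin (n+1) → B, (∀ i, u i ∈ Bf) → ξ n f u = ξ n g u

/-- `CB ∈ E Tra 𝒜`: some reflection of `CA` is contained in `CB`. -/
def InETra (CA : OpSet A) (CB : OpSet B) : Prop :=
  ∃ (h1 : B → A) (h2 : A → B), ∀ n f, f ∈ CA n →
    (fun t : Fin (n+1) → B => h2 (f (fun i => h1 (t i)))) ∈ CB n

/-- `CB ∈ E Tra Pfin 𝒜`: some reflection of a finite power of `CA` is contained in `CB`. -/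
def InETraPfin (CA : OpSet A) (CB : OpSet B) : Prop :=
  ∃ (m : ℕ) (h1 : B → (Fin m → A)) (h2 : (Fin m → A) → B),
    ∀ n f, f ∈ CA n →
      (fun u : Fin (n+1) → B => h2 (fun j => f (fun i => h1 (u i) j))) ∈ CB n

/-- `CB ∈ E Tra P 𝒜`: some reflection of a power of `CA` is contained in `CB`. -/
def InETraP (CA : OpSet A) (CB : OpSet B) : Prop :=
  ∃ (I : Type) (h1 : B → (I → A)) (h2 : (I → A) → B),
    ∀ n f, f ∈ CA n →
      (fun u : Fin (n+1) → B => h2 (fun j => f (fun i => h1 (u i) j))) ∈ CB n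

/-- `CB ∈ E Ret Pfin 𝒜`. -/
def InERetPfin (CA : OpSet A) (CB : OpSet B) : Prop :=
  ∃ (m : ℕ) (h1 : B → (Fin m → A)) (h2 : (Fin m → A) → B),
    (∀ b, h2 (h1 b) = b) ∧
    ∀ n f, f ∈ CA n →
      (fun u : Fin (n+1) → B => h2 (fun j => f (fun i => h1 (u i) j))) ∈ CB n

/-- `CB ∈ E Ret P 𝒜`. -/
def InERetP (CA : OpSet A) (CB : OpSet B) : Prop :=
  ∃ (I : Type) (h1 : B → (I → A)) (h2 : (I → A) → B),
    (∀ b, h2 (h1 b) = b) ∧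
    ∀ n f, f ∈ CA n →
      (fun u : Fin (n+1) → B => h2 (fun j => f (fun i => h1 (u i) j))) ∈ CB n

/-- `CB ∈ E H S Pfin 𝒜`: `CB` contains the clone obtained from some finite power of `CA`
by restricting to an invariant subset and taking the quotient action along a surjection. -/
def InEHSPfin (CA : OpSet A) (CB : OpSet B) : Prop :=
  ∃ (m : ℕ) (S : Set (Fin m → A)) (h : (Fin m → A) → B),
    (∀ (n : ℕ) (f : (Fin (n+1) → A) → A), f ∈ CA n →
      ∀ t : Fin (n+1) → (Fin m → A), (∀ i, t i ∈ S) → (fun j => f (fun i => t i j)) ∈ S) ∧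
    (∀ b : B, ∃ x ∈ S, h x = b) ∧
    (∀ (n : ℕ) (f : (Fin (n+1) → A) → A), f ∈ CA n → ∃ f' ∈ CB n,
      ∀ t : Fin (n+1) → (Fin m → A), (∀ i, t i ∈ S) →
        h (fun j => f (fun i => t i j)) = f' (fun i => h (t i)))

end Clone

section Pol

variable {σ : Type} {ar : σ → ℕ} {D : Type}

/-- The polymorphism clone of a relational structure. -/
def Pol (S : RelStruct σ ar D) : OpSet D :=
  fun n => { f | ∀ (s : σ) (ts : Fin (n+1) → (Fin (ar s) → D)),
    (∀ i, S.rel s (ts i)) → S.rel s (fun j => f (fun i => ts i j)) }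

end Pol

/-! ### Colorings of clones by relational structures -/

section Coloring

variable {A : Type}

/-- `F_𝒜(J)`: the closure of the projections `π^J_b` inside `A^{A^J}` under the
componentwise action of the clone `CA`. -/
inductive FreeSet (CA : OpSet A) (J : Type) : ((J → A) → A) → Prop where
  | proj (b : J) : FreeSet CA J (fun x => x b)
  | app {n : ℕ} (f : (Fin (n+1) → A) → A) (hf : f ∈ CA n)
      (g : Fin (n+1) → ((J → A) → A)) (hg : ∀ i, FreeSet CA J (g i)) :
      FreeSet CA J (fun x => f (fun i => g i x))

/-- `R^𝒜`: the closure of `{(π^J_{b1},…,π^J_{bk}) : (b1,…,bk) ∈ R}` under the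
componentwise action of the clone `CA`. -/
inductive RelLift (CA : OpSet A) {J : Type} {k : ℕ} (R : (Fin k → J) → Prop) :
    (Fin k → ((J → A) → A)) → Prop where
  | base (b : Fin k → J) (hb : R b) : RelLift CA R (fun j => fun x => x (b j))
  | app {n : ℕ} (f : (Fin (n+1) → A) → A) (hf : f ∈ CA n)
      (g : Fin (n+1) → (Fin k → ((J → A) → A))) (hg : ∀ i, RelLift CA R (g i)) :
      RelLift CA R (fun j => fun x => f (fun i => g i j x))

/-- A coloring of the clone `CA` by the relational structure `SB`:
a map `F_𝒜(B) → B` sending each lifted relation `R^𝒜` into `R`. -/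
def IsColoring {τ : Type} {br : τ → ℕ} {E : Type} (CA : OpSet A) (SB : RelStruct τ br E)
    (c : {g : (E → A) → A // FreeSet CA E g} → E) : Prop :=
  ∀ (s : τ) (t : Fin (br s) → ((E → A) → A)), RelLift CA (SB.rel s) t →
    ∀ hmem : ∀ j, FreeSet CA E (t j), SB.rel s (fun j => c ⟨t j, hmem j⟩)

/-- A strong coloring: a coloring with `c (π^B_b) = b` for all `b`. -/
def IsStrongColoring {τ : Type} {br : τ → ℕ} {E : Type} (CA : OpSet A)
    (SB : RelStruct τ br E) (c : {g : (E → A) → A // FreeSet CA E g} → E) : Prop :=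
  IsColoring CA SB c ∧ ∀ b : E, c ⟨fun x => x b, FreeSet.proj b⟩ = b

end Coloring

section Aux

variable {A E : Type} {CA : OpSet A}

/-- Normal form for elements of `R^𝒜`. -/
lemma relLift_normal (hCA : IsClone CA) {k : ℕ}
    {R : (Fin k → E) → Prop} {t : Fin k → ((E → A) → A)} (h : RelLift CA R t) :
    ∃ (n : ℕ) (f : (Fin (n+1) → A) → A) (bs : Fin (n+1) → Fin k → E),
      f ∈ CA n ∧ (∀ i, R (bs i)) ∧ ∀ j x, t j x = f (fun i => x (bs i j)) := by
  induction h with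
  | base b hb =>
      exact ⟨0, fun u => u 0, fun _ => b, hCA.proj 0 0, fun _ => hb, fun j x => rfl⟩
  | app f hf g hg ih =>
      rename_i n
      choose m F bs hF hR hEq using ih
      classical
      set mm := Finset.univ.sup m with hmm
      have hle : ∀ i, m i + 1 ≤ mm + 1 := fun i =>
        Nat.succ_le_succ (Finset.le_sup (Finset.mem_univ i))
      -- padded tuples
      set bs' : Fin (n+1) → Fin (mm+1) → Fin k → E := fun i l =>
        if h : (l : ℕ) < m i + 1 then bs i ⟨l, h⟩ else bs i 0 with hbs'
      obtain ⟨M, hM⟩ : ∃ M, (n+1) * (mm+1) = M + 1 := by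
        have : 0 < (n+1)*(mm+1) := Nat.mul_pos (Nat.succ_pos n) (Nat.succ_pos mm)
        exact ⟨(n+1)*(mm+1) - 1, by omega⟩
      set enc : Fin (n+1) → Fin (mm+1) → Fin (M+1) := fun i l =>
        Fin.cast hM (finProdFinEquiv (i, l)) with henc
      set dec : Fin (M+1) → Fin (n+1) × Fin (mm+1) := fun j =>
        finProdFinEquiv.symm (Fin.cast hM.symm j) with hdecdef
      have hdec : ∀ i l, dec (enc i l) = (i, l) := by
        intro i l
        have h1 : Fin.cast hM.symm (Fin.cast hM (finProdFinEquiv (i, l))) =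
            finProdFinEquiv (i, l) := Fin.ext rfl
        show finProdFinEquiv.symm
          (Fin.cast hM.symm (Fin.cast hM (finProdFinEquiv (i, l)))) = (i, l)
        rw [h1, Equiv.symm_apply_apply]
      refine ⟨M,
        fun u => f (fun i => F i (fun l => u (enc i (Fin.castLE (hle i) l)))),
        fun j' => bs' (dec j').1 (dec j').2, ?_, ?_, ?_⟩
      · refine hCA.comp n M f _ hf (fun i => ?_)
        exact hCA.comp (m i) M (F i) _ (hF i)
          (fun l => hCA.proj M (enc i (Fin.castLE (hle i) l)))
      · intro j'
        by_cases h : ((dec j').2 : ℕ) < m (dec j').1 + 1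
        · simpa [bs', h, Nat.lt_succ_iff.mp h] using hR (dec j').1 ⟨(dec j').2, h⟩
        · simp only [bs', dif_neg h]; exact hR (dec j').1 0
      · intro j x
        have hcast : ∀ i (l : Fin (m i + 1)),
            bs' i (Fin.castLE (hle i) l) = bs i l := by
          intro i l
          have hl : ((Fin.castLE (hle i) l : Fin (mm+1)) : ℕ) < m i + 1 := l.isLt
          simp [bs', hl, Nat.lt_succ_iff.mp l.isLt]
        calc f (fun i => g i j x) = f (fun i => F i (fun l => x (bs i l j))) := by
              congr 1; funext i; exact hEq i j x
          _ = f (fun i => F i (fun l =>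
                x (bs' (dec (enc i (Fin.castLE (hle i) l))).1
                       (dec (enc i (Fin.castLE (hle i) l))).2 j))) := by
              congr 1; funext i; congr 1; funext l
              rw [hdec i (Fin.castLE (hle i) l), hcast i l]

/-- `FreeSet` elements are `RelLift` elements for a trivial unary relation. -/
lemma freeSet_relLift {g : (E → A) → A} (h : FreeSet CA E g) :
    RelLift CA (fun _ : Fin 1 → E => True) (fun _ : Fin 1 => g) := by
  induction h with
  | proj b => exact RelLift.base (fun _ => b) trivial
  | app f hf g hg ih => exact RelLift.app f hf (fun i _ => g i) (fun i => ih i)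

/-- Normal form for elements of `F_𝒜(E)`. -/
lemma freeSet_normal (hCA : IsClone CA) {g : (E → A) → A} (h : FreeSet CA E g) :
    ∃ (n : ℕ) (f : (Fin (n+1) → A) → A) (b : Fin (n+1) → E),
      f ∈ CA n ∧ ∀ x, g x = f (fun i => x (b i)) := by
  obtain ⟨n, f, bs, hf, -, hEq⟩ := relLift_normal hCA (freeSet_relLift h)
  exact ⟨n, f, fun i => bs i 0, hf, fun x => hEq 0 x⟩

/-- Well-definedness key lemma: an h1-preserving map gives the same value on any two
representations of the same element of the free structure. -/
lemma xi_well_defined (hCA : IsClone CA) {ξ : CloneMap A E}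
    (hξ : PreservesH1 CA ξ) {n n' : ℕ}
    {f : (Fin (n+1) → A) → A} {f' : (Fin (n'+1) → A) → A}
    (hf : f ∈ CA n) (hf' : f' ∈ CA n')
    {b : Fin (n+1) → E} {b' : Fin (n'+1) → E}
    (heq : ∀ x : E → A, f (fun i => x (b i)) = f' (fun i => x (b' i))) :
    ξ n f b = ξ n' f' b' := by
  classical
  set s : Finset E := Finset.univ.image b ∪ Finset.univ.image b' with hs
  have hb : ∀ i, b i ∈ s := fun i =>
    Finset.mem_union_left _ (Finset.mem_image_of_mem b (Finset.mem_univ i))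
  have hb' : ∀ i, b' i ∈ s := fun i =>
    Finset.mem_union_right _ (Finset.mem_image_of_mem b' (Finset.mem_univ i))
  obtain ⟨m, hm⟩ : ∃ m, s.card = m + 1 := by
    have : 0 < s.card := Finset.card_pos.mpr ⟨b 0, hb 0⟩
    exact ⟨s.card - 1, by omega⟩
  set e := s.equivFin with he
  set p : Fin (n+1) → Fin (m+1) := fun i => Fin.cast hm (e ⟨b i, hb i⟩) with hp
  set p' : Fin (n'+1) → Fin (m+1) := fun i => Fin.cast hm (e ⟨b' i, hb' i⟩) with hp'
  set d : Fin (m+1) → E := fun j => (e.symm (Fin.cast hm.symm j) : E) with hd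
  have hdp : ∀ i, d (p i) = b i := by
    intro i
    have : Fin.cast hm.symm (Fin.cast hm (e ⟨b i, hb i⟩)) = e ⟨b i, hb i⟩ := Fin.ext rfl
    simp [d, p, this]
  have hdp' : ∀ i, d (p' i) = b' i := by
    intro i
    have : Fin.cast hm.symm (Fin.cast hm (e ⟨b' i, hb' i⟩)) = e ⟨b' i, hb' i⟩ :=
      Fin.ext rfl
    simp [d, p', this]
  have key : (fun u : Fin (m+1) → A => f (fun i => u (p i))) =
      (fun u => f' (fun i => u (p' i))) := by
    funext u
    have hx := heq (fun a => if h : a ∈ s then u (Fin.cast hm (e ⟨a, h⟩)) else u 0)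
    calc f (fun i => u (p i))
        = f (fun i => (fun a => if h : a ∈ s then u (Fin.cast hm (e ⟨a, h⟩)) else u 0)
            (b i)) := by
          congr 1; funext i; simp only [dif_pos (hb i)]; rfl
      _ = f' (fun i => (fun a => if h : a ∈ s then u (Fin.cast hm (e ⟨a, h⟩)) else u 0)
            (b' i)) := hx
      _ = f' (fun i => u (p' i)) := by
          congr 1; funext i; simp only [dif_pos (hb' i)]; rfl
  have h1 := hξ n m f hf p
  have h2 := hξ n' m f' hf' p'
  have h3 : (fun v : Fin (m+1) → E => ξ n f (fun i => v (p i))) =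
      (fun v => ξ n' f' (fun i => v (p' i))) := by
    rw [← h1, ← h2, key]
  have h4 := congrFun h3 d
  beta_reduce at h4
  calc ξ n f b = ξ n f (fun i => d (p i)) := by rw [funext hdp]
    _ = ξ n' f' (fun i => d (p' i)) := h4
    _ = ξ n' f' b' := by rw [funext hdp']

open Classical in
/-- The clone map induced by a coloring. -/
noncomputable def mkXi (CA : OpSet A) (c : {g : (E → A) → A // FreeSet CA E g} → E) :
    CloneMap A E := fun n f =>
  if h : f ∈ CA n then
    (fun u => c ⟨fun x => f (fun i => x (u i)),
      FreeSet.app f h (fun i x => x (u i)) (fun i => FreeSet.proj (u i))⟩)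
  else fun u => u 0

/-- The coloring induced by a clone map. -/
noncomputable def mkC (hCA : IsClone CA) (ξ : CloneMap A E) :
    {g : (E → A) → A // FreeSet CA E g} → E := fun g =>
  ξ (freeSet_normal hCA g.2).choose (freeSet_normal hCA g.2).choose_spec.choose
    (freeSet_normal hCA g.2).choose_spec.choose_spec.choose

lemma mkC_eq (hCA : IsClone CA) {ξ : CloneMap A E} (hξ : PreservesH1 CA ξ)
    (g : {g : (E → A) → A // FreeSet CA E g}) {n : ℕ}
    {f : (Fin (n+1) → A) → A} {b : Fin (n+1) → E} (hf : f ∈ CA n)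
    (hrep : ∀ x, g.1 x = f (fun i => x (b i))) : mkC hCA ξ g = ξ n f b := by
  have h1 := (freeSet_normal hCA g.2).choose_spec.choose_spec.choose_spec
  exact xi_well_defined hCA hξ h1.1 hf (fun x => (h1.2 x).symm.trans (hrep x))

end Aux

/-- Proposition 7.3 of the paper. Let `CA` be a function clone and
`SB` a relational structure with polymorphism clone `Pol SB`. Then
(i) `CA` is `SB`-colorable iff there is an h1 clone homomorphism `CA → Pol SB`, and
(ii) `CA` is strongly `SB`-colorable iff there is a strong h1 clone homomorphism
`CA → Pol SB`. -/
theorem stmt2 {A : Type} (CA : OpSet A) (hCA : IsClone CA)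
    {τ : Type} {br : τ → ℕ} {E : Type} (SB : RelStruct τ br E) :
    ((∃ c, IsColoring CA SB c) ↔ ∃ ξ, IsH1Hom CA (Pol SB) ξ) ∧
    ((∃ c, IsStrongColoring CA SB c) ↔ ∃ ξ, IsStrongH1Hom CA (Pol SB) ξ) := by
  classical
  have forward : ∀ c, IsColoring CA SB c → IsH1Hom CA (Pol SB) (mkXi CA c) := by
    intro c hc
    constructor
    · intro n f hf s ts hts
      simp only [mkXi, dif_pos hf]
      exact hc s (fun j x => f (fun i => x (ts i j)))
        (RelLift.app f hf (fun i j x => x (ts i j))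
          (fun i => RelLift.base (ts i) (hts i)))
        (fun j => FreeSet.app f hf (fun i x => x (ts i j))
          (fun i => FreeSet.proj (ts i j)))
    · intro n m f hf p
      have hminor : (fun t : Fin (m+1) → A => f (fun i => t (p i))) ∈ CA m :=
        hCA.comp n m f (fun i t => t (p i)) hf (fun i => hCA.proj m (p i))
      funext u
      simp only [mkXi, dif_pos hminor, dif_pos hf]
  have backward : ∀ ξ, IsH1Hom CA (Pol SB) ξ → IsColoring CA SB (mkC hCA ξ) := by
    intro ξ hξ s t hlift hmem
    obtain ⟨n, f, bs, hf, hR, hEq⟩ := relLift_normal hCA hlift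
    have hc : ∀ j, mkC hCA ξ ⟨t j, hmem j⟩ = ξ n f (fun i => bs i j) :=
      fun j => mkC_eq hCA hξ.2 ⟨t j, hmem j⟩ hf (fun x => hEq j x)
    have hpol := hξ.1 n f hf s bs hR
    have heq : (fun j => mkC hCA ξ ⟨t j, hmem j⟩) =
        fun j => ξ n f (fun i => bs i j) := funext hc
    rw [heq]; exact hpol
  refine ⟨⟨?_, ?_⟩, ⟨?_, ?_⟩⟩
  · rintro ⟨c, hc⟩; exact ⟨mkXi CA c, forward c hc⟩
  · rintro ⟨ξ, hξ⟩; exact ⟨mkC hCA ξ, backward ξ hξ⟩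
  · rintro ⟨c, hc⟩
    refine ⟨mkXi CA c, forward c hc.1, ?_⟩
    intro n i
    funext u
    simp only [mkXi, dif_pos (hCA.proj n i)]
    exact hc.2 (u i)
  · rintro ⟨ξ, hξ⟩
    refine ⟨mkC hCA ξ, backward ξ hξ.1, ?_⟩
    intro b
    have h := mkC_eq hCA hξ.1.2 ⟨fun x => x b, FreeSet.proj b⟩
      (f := fun u => u 0) (b := fun _ => b) (hCA.proj 0 0) (fun x => rfl)
    rw [h, hξ.2 0 0]
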